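/- Lower bound on the smoothed gradient norm: Let d ≥ 1, L ≥ 0, μ > 0, and let f : ℝ^d → ℝ be differentiable and L-smooth. Then for every x ∈ ℝ^d, ‖∇f_μ(x)‖² ≥ (1/2)‖∇f(x)‖² − (μ² L² / 4)(d + 3)³. -/

import Mathlib

open MeasureTheory ProbabilityTheory

/-- The standard Gaussian measure `N(0, I_d)` on `ℝ^d`. -/
noncomputable def stdGaussian (d : ℕ) : Measure (EuclideanSpace ℝ (Fin d)) :=
  (Measure.pi fun _ : Fin d => gaussianReal 0 1).map
    (MeasurableEquiv.toLp 2 (Fin d → ℝ))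

section Aux
open Real Set
open scoped ENNReal NNReal


lemma gr_eq : gaussianReal 0 1 = volume.withDensity (gaussianPDF 0 1) :=
  gaussianReal_of_var_ne_zero 0 one_ne_zero

lemma pdf_eq (t : ℝ) : (gaussianPDF 0 1 t).toReal
    = (Real.sqrt (2 * π))⁻¹ * Real.exp (-(2⁻¹ : ℝ) * t ^ 2) := by
  rw [gaussianPDF, ENNReal.toReal_ofReal (gaussianPDFReal_nonneg _ _ _), gaussianPDFReal]
  congr 1
  · norm_num
  · congr 1
    push_cast
    ring

lemma int_Ioi : ∫ t in Ioi (0:ℝ), t * Real.exp (-(2⁻¹:ℝ) * t ^ 2) = 1 := by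
  have h := integral_rpow_mul_exp_neg_mul_rpow (p := 2) (q := 1) (b := 2⁻¹)
    (by norm_num) (by norm_num) (by norm_num)
  simp only [Real.rpow_one, Real.rpow_two] at h
  rw [h, show ((1:ℝ)+1)/2 = 1 by norm_num, Real.Gamma_one]
  rw [show (-(1+1)/2 : ℝ) = ((-1 : ℤ) : ℝ) by norm_num, Real.rpow_intCast]
  norm_num

lemma int_abs : ∫ t : ℝ, |t| * Real.exp (-(2⁻¹:ℝ) * t ^ 2) = 2 := by
  have : ∀ t : ℝ, |t| * Real.exp (-(2⁻¹:ℝ) * t ^ 2) = |t| * Real.exp (-(2⁻¹:ℝ) * |t| ^ 2) := by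
    intro t; rw [sq_abs]
  simp_rw [this]
  rw [integral_comp_abs (f := fun t => t * Real.exp (-(2⁻¹:ℝ) * t ^ 2)), int_Ioi]
  norm_num

lemma integrable_gauss_of_bound {g : ℝ → ℝ} (hg : Measurable g)
    (hb : Integrable (fun t => g t * Real.exp (-(2⁻¹:ℝ) * t ^ 2)) volume) :
    Integrable g (gaussianReal 0 1) := by
  rw [gr_eq, integrable_withDensity_iff (measurable_gaussianPDF 0 1)
    (ae_of_all _ fun x => ENNReal.ofReal_lt_top)]
  have : ∀ t : ℝ, g t * (gaussianPDF 0 1 t).toReal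
      = (Real.sqrt (2 * π))⁻¹ * (g t * Real.exp (-(2⁻¹:ℝ) * t ^ 2)) := by
    intro t; rw [pdf_eq]; ring
  simp_rw [this]
  exact hb.const_mul _

lemma integrable_abs_gauss : Integrable (fun t : ℝ => |t|) (gaussianReal 0 1) := by
  refine integrable_gauss_of_bound measurable_abs ?_
  have := integrable_mul_exp_neg_mul_sq (b := (2⁻¹:ℝ)) (by norm_num)
  refine this.abs.congr (ae_of_all _ fun t => ?_)
  dsimp only
  rw [abs_mul, abs_of_pos (Real.exp_pos _)]

lemma integrable_sq_gauss : Integrable (fun t : ℝ => t ^ 2) (gaussianReal 0 1) := by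
  refine integrable_gauss_of_bound (by measurability) ?_
  have := integrable_rpow_mul_exp_neg_mul_sq (b := (2⁻¹:ℝ)) (by norm_num) (s := 2) (by norm_num)
  refine this.congr (ae_of_all _ fun t => ?_)
  dsimp only
  norm_num [show ((2:ℝ)) = ((2:ℕ):ℝ) by norm_num, Real.rpow_natCast]

lemma integral_abs_gauss_le : ∫ t, |t| ∂(gaussianReal 0 1) ≤ 2 := by
  have h1 : ∫ t, |t| ∂(gaussianReal 0 1)
      = (Real.sqrt (2 * π))⁻¹ * ∫ t : ℝ, |t| * Real.exp (-(2⁻¹:ℝ) * t ^ 2) := by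
    have hpd : gaussianPDF 0 1 = fun t => ((gaussianPDFReal 0 1 t).toNNReal : ℝ≥0∞) := rfl
    rw [gr_eq, hpd, integral_withDensity_eq_integral_smul
      (measurable_gaussianPDFReal 0 1).real_toNNReal _, ← integral_const_mul]
    congr 1 with t
    have : ((gaussianPDFReal 0 1 t).toNNReal : ℝ) = (gaussianPDF 0 1 t).toReal := by
      simp [gaussianPDF, Real.coe_toNNReal _ (gaussianPDFReal_nonneg 0 1 t)]
      rw [ENNReal.toReal_ofReal (gaussianPDFReal_nonneg 0 1 t)]
    rw [NNReal.smul_def, smul_eq_mul, this, pdf_eq]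
    ring
  rw [h1, int_abs]
  have h2 : (1:ℝ) ≤ Real.sqrt (2 * π) := by
    rw [show (1:ℝ) = Real.sqrt 1 by simp]
    exact Real.sqrt_le_sqrt (by nlinarith [Real.pi_gt_three])
  nlinarith [Real.sqrt_nonneg (2*π), inv_le_one_of_one_le₀ h2,
    inv_nonneg.mpr (le_trans zero_le_one h2)]

instance (d : ℕ) : IsProbabilityMeasure (stdGaussian d) := by
  unfold _root_.stdGaussian
  exact Measure.isProbabilityMeasure_map (MeasurableEquiv.measurable _).aemeasurable

lemma measurePreserving_eval (d : ℕ) (i : Fin d) :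
    MeasurePreserving (Function.eval i) (Measure.pi fun _ : Fin d => gaussianReal 0 1)
      (gaussianReal 0 1) := by
  refine ⟨measurable_pi_apply i, ?_⟩
  ext s hs
  rw [Measure.map_apply (measurable_pi_apply i) hs, Set.eval_preimage, Measure.pi_pi]
  refine (Finset.prod_eq_single_of_mem i (Finset.mem_univ i) fun j _ hj => ?_).trans ?_
  · rw [Function.update_of_ne hj]; simp
  · rw [Function.update_self]

lemma integrable_comp_eval (d : ℕ) {h : ℝ → ℝ} (hh : Integrable h (gaussianReal 0 1))
    (i : Fin d) :
    Integrable (fun u : EuclideanSpace ℝ (Fin d) => h (u i)) (stdGaussian d) := by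
  unfold _root_.stdGaussian
  rw [integrable_map_equiv]
  exact ((measurePreserving_eval d i).integrable_comp hh.aestronglyMeasurable).mpr hh

lemma integral_comp_eval (d : ℕ) {h : ℝ → ℝ} (hh : Integrable h (gaussianReal 0 1)) (i : Fin d) :
    ∫ u, h (u i) ∂(stdGaussian d) = ∫ t, h t ∂(gaussianReal 0 1) := by
  unfold _root_.stdGaussian
  rw [MeasureTheory.integral_map_equiv]
  show ∫ y : Fin d → ℝ, h (y i) ∂(Measure.pi fun _ => gaussianReal 0 1) = _
  rw [← (measurePreserving_eval d i).map_eq,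
    integral_map (measurable_pi_apply i).aemeasurable
      (((measurePreserving_eval d i).map_eq).symm ▸ hh.aestronglyMeasurable),
    (measurePreserving_eval d i).map_eq]

lemma norm_le_sum_abs (d : ℕ) (u : EuclideanSpace ℝ (Fin d)) : ‖u‖ ≤ ∑ i, |u i| := by
  rw [EuclideanSpace.norm_eq]
  have h1 : ∑ i, ‖u i‖ ^ 2 ≤ (∑ i, |u i|) ^ 2 := by
    simp_rw [Real.norm_eq_abs]
    exact Finset.sum_sq_le_sq_sum_of_nonneg fun i _ => abs_nonneg _
  calc Real.sqrt (∑ i, ‖u i‖ ^ 2) ≤ Real.sqrt ((∑ i, |u i|) ^ 2) := Real.sqrt_le_sqrt h1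
    _ = ∑ i, |u i| := Real.sqrt_sq (Finset.sum_nonneg fun i _ => abs_nonneg _)

lemma integrable_norm_std (d : ℕ) :
    Integrable (fun u : EuclideanSpace ℝ (Fin d) => ‖u‖) (stdGaussian d) := by
  have hsum : Integrable (fun u : EuclideanSpace ℝ (Fin d) => ∑ i, |u i|) (stdGaussian d) :=
    integrable_finset_sum _ fun i _ => integrable_comp_eval d integrable_abs_gauss i
  refine hsum.mono' ?_ (ae_of_all _ fun u => ?_)
  · exact (continuous_norm).aestronglyMeasurable
  · rw [Real.norm_eq_abs, abs_of_nonneg (norm_nonneg u)]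
    exact norm_le_sum_abs d u

lemma integral_norm_std_le (d : ℕ) : ∫ u, ‖u‖ ∂(stdGaussian d) ≤ 2 * d := by
  have h1 : ∫ u, ‖u‖ ∂(stdGaussian d) ≤ ∫ u, ∑ i, |u i| ∂(stdGaussian d) := by
    refine integral_mono (integrable_norm_std d)
      (integrable_finset_sum _ fun i _ => integrable_comp_eval d integrable_abs_gauss i)
      fun u => norm_le_sum_abs d u
  have h2 : ∫ u, ∑ i, |u i| ∂(stdGaussian d) = ∑ i : Fin d, ∫ u, |u i| ∂(stdGaussian d) :=
    integral_finset_sum _ fun i _ => integrable_comp_eval d integrable_abs_gauss i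
  have h3 : ∀ i : Fin d, ∫ u : EuclideanSpace ℝ (Fin d), |u i| ∂(stdGaussian d) ≤ 2 := by
    intro i
    rw [integral_comp_eval d integrable_abs_gauss i]
    exact integral_abs_gauss_le
  calc ∫ u, ‖u‖ ∂(stdGaussian d) ≤ ∑ i : Fin d, ∫ u, |u i| ∂(stdGaussian d) := h1.trans h2.le
    _ ≤ ∑ i : Fin d, 2 := Finset.sum_le_sum fun i _ => h3 i
    _ = 2 * d := by simp [mul_comm]

lemma integrable_normsq_std (d : ℕ) :
    Integrable (fun u : EuclideanSpace ℝ (Fin d) => ‖u‖ ^ 2) (stdGaussian d) := by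
  have hsum : Integrable (fun u : EuclideanSpace ℝ (Fin d) => ∑ i, (u i) ^ 2) (stdGaussian d) :=
    integrable_finset_sum _ fun i _ => integrable_comp_eval d integrable_sq_gauss i
  refine hsum.congr (ae_of_all _ fun u => ?_)
  dsimp only
  rw [EuclideanSpace.norm_eq, Real.sq_sqrt (Finset.sum_nonneg fun i _ => sq_nonneg _)]
  simp [Real.norm_eq_abs, sq_abs]

section Main
variable {d : ℕ} {L μ : ℝ} {f : EuclideanSpace ℝ (Fin d) → ℝ}

local notation "E" => EuclideanSpace ℝ (Fin d)

lemma grad_eq (a : EuclideanSpace ℝ (Fin d)) :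
    gradient f a = (InnerProductSpace.toDual ℝ (EuclideanSpace ℝ (Fin d))).symm
      (fderiv ℝ f a) := rfl

lemma fderiv_lip (hsmooth : ∀ x y, ‖gradient f x - gradient f y‖ ≤ L * ‖x - y‖)
    (a b : EuclideanSpace ℝ (Fin d)) : ‖fderiv ℝ f a - fderiv ℝ f b‖ ≤ L * ‖a - b‖ := by
  have := hsmooth a b
  rw [grad_eq, grad_eq, ← map_sub, LinearIsometryEquiv.norm_map] at this
  exact this

lemma fderiv_cont (hL : 0 ≤ L)
    (hsmooth : ∀ x y, ‖gradient f x - gradient f y‖ ≤ L * ‖x - y‖) :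
    Continuous (fderiv ℝ f) := by
  refine (LipschitzWith.of_dist_le_mul (K := L.toNNReal) fun a b => ?_).continuous
  rw [dist_eq_norm, dist_eq_norm, Real.coe_toNNReal _ hL]
  exact fderiv_lip hsmooth a b

lemma smoothed_hasFDerivAt (hL : 0 ≤ L) (hμ : 0 < μ)
    (hf : Differentiable ℝ f)
    (hsmooth : ∀ x y, ‖gradient f x - gradient f y‖ ≤ L * ‖x - y‖)
    (x : EuclideanSpace ℝ (Fin d)) :
    HasFDerivAt (fun y => ∫ u, f (y + μ • u) ∂stdGaussian d)
      (∫ u, fderiv ℝ f (x + μ • u) ∂stdGaussian d) x := by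
  set D := fderiv ℝ f with hDdef
  have haffu : ∀ y : E, Continuous fun u : E => y + μ • u := fun y =>
    continuous_const.add (continuous_id.const_smul μ)
  have haff2 : Continuous fun u : E => x + μ • u := haffu x
  refine hasFDerivAt_integral_of_dominated_of_fderiv_le (s := Metric.ball x 1) (Metric.ball_mem_nhds x one_pos)
    (F' := fun y u => D (y + μ • u)) (bound := fun u => ‖D x‖ + L * (1 + μ * ‖u‖))
    ?_ ?_ ?_ ?_ ?_ ?_
  · exact Filter.Eventually.of_forall fun y =>
      (hf.continuous.comp (haffu y)).aestronglyMeasurable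
  · -- Integrable (fun u => f (x + μ • u))
    have hb : ∀ u : E, |f (x + μ • u)| ≤ |f x| + (‖D x‖ + L * (μ * ‖u‖)) * (μ * ‖u‖) := by
      intro u
      have hmv : ‖f (x + μ • u) - f x‖ ≤ (‖D x‖ + L * (μ * ‖u‖)) * ‖(x + μ • u) - x‖ := by
        refine Convex.norm_image_sub_le_of_norm_fderiv_le
          (fun z _ => hf z) (fun z hz => ?_)
          (convex_closedBall x (μ * ‖u‖)) (Metric.mem_closedBall_self (by positivity)) ?_ 
        · have h1 : ‖D z‖ ≤ ‖D x‖ + ‖D z - D x‖ := by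
            have := norm_add_le (D x) (D z - D x); simpa using this
          refine h1.trans (add_le_add_right ?_ _)
          refine (fderiv_lip hsmooth z x).trans ?_
          have := mem_closedBall_iff_norm.mp hz
          nlinarith
        · rw [mem_closedBall_iff_norm]
          simp [norm_smul, abs_of_pos hμ]
      rw [add_sub_cancel_left, norm_smul, Real.norm_eq_abs, Real.norm_eq_abs,
        abs_of_pos hμ] at hmv
      calc |f (x + μ • u)| ≤ |f x| + |f (x + μ • u) - f x| := by
            have := abs_add_le (f x) (f (x + μ • u) - f x); simpa using this
        _ ≤ _ := by exact add_le_add_right hmv _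
    refine Integrable.mono' (g := fun u => |f x| + (‖D x‖ + L * (μ * ‖u‖)) * (μ * ‖u‖)) ?_
      ((hf.continuous.comp haff2).aestronglyMeasurable) (ae_of_all _ fun u => by
        rw [Real.norm_eq_abs]; exact hb u)
    have h1 : Integrable (fun u : E => ‖u‖) (stdGaussian d) := integrable_norm_std d
    have h2 : Integrable (fun u : E => ‖u‖ ^ 2) (stdGaussian d) := integrable_normsq_std d
    have : (fun u : E => |f x| + (‖D x‖ + L * (μ * ‖u‖)) * (μ * ‖u‖))
        = fun u : E => (|f x|) + ((‖D x‖ * μ) * ‖u‖ + (L * μ ^ 2) * ‖u‖ ^ 2) := by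
      funext u; ring
    rw [this]
    exact (integrable_const _).add ((h1.const_mul _).add (h2.const_mul _))
  · exact ((fderiv_cont hL hsmooth).comp haff2).aestronglyMeasurable
  · refine ae_of_all _ fun u y hy => ?_
    have h1 : ‖D (y + μ • u)‖ ≤ ‖D x‖ + ‖D (y + μ • u) - D x‖ := by
      have := norm_add_le (D x) (D (y + μ • u) - D x); simpa using this
    refine h1.trans (add_le_add_right ?_ _)
    refine (fderiv_lip hsmooth _ x).trans ?_
    have h2 : ‖y + μ • u - x‖ ≤ ‖y - x‖ + μ * ‖u‖ := by
      have := norm_add_le (y - x) (μ • u)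
      rw [norm_smul, Real.norm_eq_abs, abs_of_pos hμ] at this
      convert this using 2
      · rfl
      abel
    have h3 : ‖y - x‖ < 1 := by
      rw [Metric.mem_ball, dist_eq_norm] at hy; exact hy
    nlinarith
  · refine ((integrable_const _).add ?_)
    have h1 : Integrable (fun u : E => ‖u‖) (stdGaussian d) := integrable_norm_std d
    have : (fun u : E => L * (1 + μ * ‖u‖)) = fun u : E => L + (L * μ) * ‖u‖ := by
      funext u; ring
    rw [this]
    exact (integrable_const _).add (h1.const_mul _)
  · refine ae_of_all _ fun u y _ => ?_
    have h := ((hf (y + μ • u)).hasFDerivAt).comp y ((hasFDerivAt_id y).add_const (μ • u))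
    simpa [Function.comp_def, hDdef] using h

end Main


end Aux

/-- Lower bound on the smoothed gradient norm:
`‖∇f_μ(x)‖² ≥ (1/2)‖∇f(x)‖² - (μ² L² / 4)(d+3)³`. -/
theorem smoothed_gradient_norm_lower_bound
    (d : ℕ) (hd : 1 ≤ d) (L μ : ℝ) (hL : 0 ≤ L) (hμ : 0 < μ)
    (f : EuclideanSpace ℝ (Fin d) → ℝ)
    (hf : Differentiable ℝ f)
    (hsmooth : ∀ x y, ‖gradient f x - gradient f y‖ ≤ L * ‖x - y‖)
    (x : EuclideanSpace ℝ (Fin d)) :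
    ‖gradient (fun y => ∫ u, f (y + μ • u) ∂stdGaussian d) x‖ ^ 2
      ≥ (1 / 2) * ‖gradient f x‖ ^ 2 - μ ^ 2 * L ^ 2 / 4 * ((d : ℝ) + 3) ^ 3 := by
  have hDcont : Continuous (fderiv ℝ f) := fderiv_cont hL hsmooth
  have haff2 : Continuous fun u : EuclideanSpace ℝ (Fin d) => x + μ • u :=
    continuous_const.add (continuous_id.const_smul μ)
  have hDbound : ∀ u : EuclideanSpace ℝ (Fin d),
      ‖fderiv ℝ f (x + μ • u)‖ ≤ ‖fderiv ℝ f x‖ + (L * μ) * ‖u‖ := by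
    intro u
    have h1 : ‖fderiv ℝ f (x + μ • u)‖
        ≤ ‖fderiv ℝ f x‖ + ‖fderiv ℝ f (x + μ • u) - fderiv ℝ f x‖ := by
      have := norm_add_le (fderiv ℝ f x) (fderiv ℝ f (x + μ • u) - fderiv ℝ f x)
      simpa using this
    refine h1.trans (add_le_add_right ?_ _)
    refine (fderiv_lip hsmooth _ x).trans ?_
    rw [add_sub_cancel_left, norm_smul, Real.norm_eq_abs, abs_of_pos hμ]
    exact le_of_eq (by ring)
  have hIntD : Integrable (fun u : EuclideanSpace ℝ (Fin d) => fderiv ℝ f (x + μ • u))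
      (stdGaussian d) := by
    refine Integrable.mono' (g := fun u => ‖fderiv ℝ f x‖ + (L * μ) * ‖u‖) ?_
      ((hDcont.comp haff2).aestronglyMeasurable) (ae_of_all _ fun u => hDbound u)
    exact (integrable_const _).add ((integrable_norm_std d).const_mul _)
  have hDer := smoothed_hasFDerivAt hL hμ hf hsmooth x
  have hgrad : gradient (fun y => ∫ u, f (y + μ • u) ∂stdGaussian d) x
      = ∫ u, gradient f (x + μ • u) ∂stdGaussian d := by
    have hcomm := (InnerProductSpace.toDual ℝ
      (EuclideanSpace ℝ (Fin d))).symm.toLinearIsometry.integral_comp_comm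
      (μ := stdGaussian d) (fun u => fderiv ℝ f (x + μ • u))
    rw [grad_eq, hDer.fderiv]
    exact hcomm.symm
  have hIntg : Integrable (fun u : EuclideanSpace ℝ (Fin d) => gradient f (x + μ • u))
      (stdGaussian d) := by
    have h := ((InnerProductSpace.toDual ℝ
      (EuclideanSpace ℝ (Fin d))).symm.toLinearIsometry.toContinuousLinearMap).integrable_comp
      hIntD
    exact h.congr (ae_of_all _ fun u => rfl)
  have hdiff : ‖(∫ u, gradient f (x + μ • u) ∂stdGaussian d) - gradient f x‖
      ≤ L * μ * (2 * d) := by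
    have hconst : ∫ _u : EuclideanSpace ℝ (Fin d), gradient f x ∂stdGaussian d
        = gradient f x := by
      rw [integral_const]; simp
    rw [← hconst, ← integral_sub hIntg (integrable_const _)]
    refine (norm_integral_le_integral_norm _).trans ?_
    have hmono : ∫ u, ‖gradient f (x + μ • u) - gradient f x‖ ∂stdGaussian d
        ≤ ∫ u : EuclideanSpace ℝ (Fin d), (L * μ) * ‖u‖ ∂stdGaussian d := by
      refine integral_mono ?_ ((integrable_norm_std d).const_mul _) fun u => ?_
      · exact (hIntg.sub (integrable_const _)).norm
      · refine (hsmooth _ _).trans ?_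
        rw [add_sub_cancel_left, norm_smul, Real.norm_eq_abs, abs_of_pos hμ]
        exact le_of_eq (by ring)
    refine hmono.trans ?_
    rw [integral_const_mul]
    have h2d := integral_norm_std_le d
    have hLμ : 0 ≤ L * μ := by positivity
    nlinarith [integral_nonneg (μ := stdGaussian d) (f := fun u : EuclideanSpace ℝ (Fin d) => ‖u‖)
      (fun u : EuclideanSpace ℝ (Fin d) => norm_nonneg u)]
  have hb_le : ‖gradient f x‖
      ≤ ‖gradient (fun y => ∫ u, f (y + μ • u) ∂stdGaussian d) x‖ + L * μ * (2 * d) := by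
    have h2 := abs_norm_sub_norm_le
      (∫ u, gradient f (x + μ • u) ∂stdGaussian d) (gradient f x)
    have h3 := (abs_le.mp h2).1
    rw [hgrad]
    linarith [hdiff]
  have hd' : (1 : ℝ) ≤ d := by exact_mod_cast hd
  have ha : 0 ≤ ‖gradient (fun y => ∫ u, f (y + μ • u) ∂stdGaussian d) x‖ := norm_nonneg _
  have hb : 0 ≤ ‖gradient f x‖ := norm_nonneg _
  have hc : 0 ≤ L * μ * (2 * d) := by positivity
  set a := ‖gradient (fun y => ∫ u, f (y + μ • u) ∂stdGaussian d) x‖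
  set b := ‖gradient f x‖
  have hsq : b ^ 2 ≤ 2 * a ^ 2 + 2 * (L * μ * (2 * d)) ^ 2 := by
    nlinarith [sq_nonneg (a - L * μ * (2 * d))]
  have hkey : (L * μ * (2 * d)) ^ 2 ≤ μ ^ 2 * L ^ 2 / 4 * ((d : ℝ) + 3) ^ 3 := by
    have h16 : 16 * (d : ℝ) ^ 2 ≤ ((d : ℝ) + 3) ^ 3 := by
      nlinarith [mul_nonneg (sub_nonneg.mpr hd') (sq_nonneg ((d:ℝ) - 4)), sq_nonneg ((d:ℝ)-4)]
    nlinarith [sq_nonneg (L * μ), mul_nonneg (mul_nonneg hL hμ.le) (mul_nonneg hL hμ.le)]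
  nlinarith
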